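/- Let u(t,x) = x·Φ(g(t,x)) − K e^{−rt} Φ(h(t,x)) where g(t,x) = (ln(x/K) + (r + σ²/2)t)/(σ√t) and h(t,x) = g(t,x) − σ√t, with K, σ, r > 0. Then for all x > 0 and t > 0, u satisfies the Black-Scholes PDE: ∂u/∂t = (σ²/2) x² ∂²u/∂x² + r x ∂u/∂x − r u. -/

import Mathlib

open Real

/-- The standard normal cumulative distribution function. -/
noncomputable def stdNormalCDF (x : ℝ) : ℝ :=
  (Real.sqrt (2 * Real.pi))⁻¹ * ∫ y in Set.Iio x, Real.exp (-y ^ 2 / 2)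

lemma gauss_integrable : MeasureTheory.Integrable (fun s : ℝ => Real.exp (-s ^ 2 / 2)) := by
  have := integrable_exp_neg_mul_sq (show (0:ℝ) < 1/2 by norm_num)
  convert this using 2 with s
  ring_nf

lemma cdf_hasDerivAt (y : ℝ) :
    HasDerivAt stdNormalCDF ((Real.sqrt (2 * Real.pi))⁻¹ * Real.exp (-y ^ 2 / 2)) y := by
  have hi := gauss_integrable
  have key : stdNormalCDF = fun z =>
      (Real.sqrt (2 * Real.pi))⁻¹ *
        ((∫ s in Set.Iic (0:ℝ), Real.exp (-s ^ 2 / 2)) +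
          ∫ s in (0:ℝ)..z, Real.exp (-s ^ 2 / 2)) := by
    funext z
    rw [stdNormalCDF, ← MeasureTheory.integral_Iic_eq_integral_Iio,
      ← intervalIntegral.integral_Iic_sub_Iic hi.integrableOn hi.integrableOn]
    ring
  rw [key]
  have hc : Continuous fun s : ℝ => Real.exp (-s ^ 2 / 2) := by continuity
  have hd : HasDerivAt (fun z => ∫ s in (0:ℝ)..z, Real.exp (-s ^ 2 / 2))
      (Real.exp (-y ^ 2 / 2)) y :=
    intervalIntegral.integral_hasDerivAt_right hi.intervalIntegrable
      (hc.stronglyMeasurableAtFilter _ _) hc.continuousAt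
  exact ((hd.const_add _).const_mul _)


/-- The Black–Scholes solution `u(t,x) = x Φ(g(t,x)) - K e^{-rt} Φ(h(t,x))`
satisfies `∂u/∂t = (σ²/2) x² ∂²u/∂x² + r x ∂u/∂x - r u` for `x > 0`, `t > 0`. -/
theorem blackScholes_pde (K σ r : ℝ) (hK : 0 < K) (hσ : 0 < σ) (hr : 0 < r)
    (g h u : ℝ → ℝ → ℝ)
    (hg : ∀ t x, g t x = (Real.log (x / K) + (r + σ ^ 2 / 2) * t) / (σ * Real.sqrt t))
    (hh : ∀ t x, h t x = g t x - σ * Real.sqrt t)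
    (hu : ∀ t x, u t x = x * stdNormalCDF (g t x)
        - K * Real.exp (-r * t) * stdNormalCDF (h t x)) :
    ∀ x > (0 : ℝ), ∀ t > (0 : ℝ),
      deriv (fun s => u s x) t =
        σ ^ 2 / 2 * x ^ 2 * deriv (fun y => deriv (fun y' => u t y') y) x
          + r * x * deriv (fun y => u t y) x - r * u t x := by
  intro x hx t ht
  set st := Real.sqrt t with hst_def
  have hst : 0 < st := Real.sqrt_pos.mpr ht
  have hst2 : st ^ 2 = t := Real.sq_sqrt ht.le
  set c : ℝ := (Real.sqrt (2 * Real.pi))⁻¹ with hc_def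
  -- key identity
  have key : ∀ y : ℝ, 0 < y →
      K * Real.exp (-r * t) * (c * Real.exp (-(h t y) ^ 2 / 2))
        = y * (c * Real.exp (-(g t y) ^ 2 / 2)) := by
    intro y hy
    have hgm : g t y * (σ * st) = Real.log y - Real.log K + (r + σ ^ 2 / 2) * t := by
      rw [hg, Real.log_div hy.ne' hK.ne']
      field_simp
      rw [hst_def]
    rw [hh]
    have l1 : K * Real.exp (-r * t) * (c * Real.exp (-(g t y - σ * st) ^ 2 / 2))
        = c * Real.exp (Real.log K + (-r * t) + (-(g t y - σ * st) ^ 2 / 2)) := by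
      rw [Real.exp_add, Real.exp_add, Real.exp_log hK]; ring
    have l2 : y * (c * Real.exp (-(g t y) ^ 2 / 2))
        = c * Real.exp (Real.log y + (-(g t y) ^ 2 / 2)) := by
      rw [Real.exp_add, Real.exp_log hy]; ring
    rw [l1, l2]
    congr 1
    rw [Real.exp_eq_exp]
    linear_combination hgm - σ ^ 2 / 2 * hst2
  -- x-derivatives
  have hgd : ∀ y : ℝ, 0 < y → HasDerivAt (fun y' => g t y') (1 / (y * (σ * st))) y := by
    intro y hy
    have h1 : HasDerivAt (fun y' : ℝ => y' / K) (1 / K) y := (hasDerivAt_id y).div_const K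
    have h2 : HasDerivAt (fun y' => Real.log (y' / K)) ((y / K)⁻¹ * (1 / K)) y :=
      (Real.hasDerivAt_log (by positivity)).comp y h1
    have h3 : HasDerivAt (fun y' => (Real.log (y' / K) + (r + σ ^ 2 / 2) * t) / (σ * st))
        (((y / K)⁻¹ * (1 / K)) / (σ * st)) y := (h2.add_const _).div_const _
    rw [show (fun y' => g t y') = fun y' =>
        (Real.log (y' / K) + (r + σ ^ 2 / 2) * t) / (σ * st) from funext fun y' => hg t y']
    convert h3 using 1
    field_simp
  have hux : ∀ y : ℝ, 0 < y → HasDerivAt (fun y' => u t y') (stdNormalCDF (g t y)) y := by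
    intro y hy
    have hhd : HasDerivAt (fun y' => h t y') (1 / (y * (σ * st))) y := by
      rw [show (fun y' => h t y') = fun y' => g t y' - σ * st from funext fun y' => hh t y']
      exact (hgd y hy).sub_const _
    have hΦg : HasDerivAt (fun y' => stdNormalCDF (g t y'))
        (c * Real.exp (-(g t y) ^ 2 / 2) * (1 / (y * (σ * st)))) y :=
      (cdf_hasDerivAt (g t y)).comp y (hgd y hy)
    have hΦh : HasDerivAt (fun y' => stdNormalCDF (h t y'))
        (c * Real.exp (-(h t y) ^ 2 / 2) * (1 / (y * (σ * st)))) y :=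
      (cdf_hasDerivAt (h t y)).comp y hhd
    have hmul : HasDerivAt (fun y' => y' * stdNormalCDF (g t y'))
        (1 * stdNormalCDF (g t y) + y * (c * Real.exp (-(g t y) ^ 2 / 2) * (1 / (y * (σ * st))))) y :=
      (hasDerivAt_id y).mul hΦg
    have hfull := hmul.sub (hΦh.const_mul (K * Real.exp (-r * t)))
    rw [show (fun y' => u t y') = fun y' => y' * stdNormalCDF (g t y')
        - K * Real.exp (-r * t) * stdNormalCDF (h t y') from funext fun y' => hu t y']
    refine hfull.congr_deriv ?_
    linear_combination (-(1 / (y * (σ * st)))) * (key y hy)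
  have hD1 : ∀ y : ℝ, 0 < y → deriv (fun y' => u t y') y = stdNormalCDF (g t y) :=
    fun y hy => (hux y hy).deriv
  -- second x-derivative
  have hev : (fun y => deriv (fun y' => u t y') y) =ᶠ[nhds x] fun y => stdNormalCDF (g t y) := by
    filter_upwards [isOpen_Ioi.mem_nhds hx] with y hy using hD1 y hy
  have hsecond : deriv (fun y => deriv (fun y' => u t y') y) x
      = c * Real.exp (-(g t x) ^ 2 / 2) * (1 / (x * (σ * st))) := by
    rw [hev.deriv_eq]
    exact (((cdf_hasDerivAt (g t x)).comp x (hgd x hx))).deriv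
  -- time derivative
  have hN : HasDerivAt (fun s => Real.log (x / K) + (r + σ ^ 2 / 2) * s) (r + σ ^ 2 / 2) t := by
    have := ((hasDerivAt_id t).const_mul (r + σ ^ 2 / 2)).const_add (Real.log (x / K))
    simpa using this
  have hDen : HasDerivAt (fun s => σ * Real.sqrt s) (σ * (1 / (2 * st))) t :=
    (Real.hasDerivAt_sqrt ht.ne').const_mul σ
  have hDne : σ * st ≠ 0 := by positivity
  set gt' : ℝ := ((r + σ ^ 2 / 2) * (σ * st)
      - (Real.log (x / K) + (r + σ ^ 2 / 2) * t) * (σ * (1 / (2 * st)))) / (σ * st) ^ 2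
    with hgt'_def
  have hgt : HasDerivAt (fun s => g s x) gt' t := by
    rw [show (fun s => g s x) = fun s =>
        (Real.log (x / K) + (r + σ ^ 2 / 2) * s) / (σ * Real.sqrt s) from funext fun s => hg s x]
    exact hN.div hDen hDne
  have hht : HasDerivAt (fun s => h s x) (gt' - σ * (1 / (2 * st))) t := by
    rw [show (fun s => h s x) = fun s => g s x - σ * Real.sqrt s from funext fun s => hh s x]
    exact hgt.sub hDen
  have hexp : HasDerivAt (fun s => Real.exp (-r * s)) (Real.exp (-r * t) * (-r)) t := by
    have hlin : HasDerivAt (fun s : ℝ => -r * s) (-r) t := by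
      have := (hasDerivAt_id t).const_mul (-r)
      simpa [neg_mul] using this
    exact HasDerivAt.exp hlin
  have hΦgt : HasDerivAt (fun s => stdNormalCDF (g s x))
      (c * Real.exp (-(g t x) ^ 2 / 2) * gt') t := by
    have := (cdf_hasDerivAt (g t x)).comp t hgt; exact this
  have hΦht : HasDerivAt (fun s => stdNormalCDF (h s x))
      (c * Real.exp (-(h t x) ^ 2 / 2) * (gt' - σ * (1 / (2 * st)))) t := by
    have := (cdf_hasDerivAt (h t x)).comp t hht; exact this
  have hprod := (hexp.const_mul K).mul hΦht
  have hfull := (hΦgt.const_mul x).sub hprod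
  have hut : deriv (fun s => u s x) t
      = x * (c * Real.exp (-(g t x) ^ 2 / 2) * gt')
        - (K * (Real.exp (-r * t) * (-r)) * stdNormalCDF (h t x)
          + K * Real.exp (-r * t)
            * (c * Real.exp (-(h t x) ^ 2 / 2) * (gt' - σ * (1 / (2 * st))))) := by
    rw [show (fun s => u s x) = fun s => x * stdNormalCDF (g s x)
        - K * Real.exp (-r * s) * stdNormalCDF (h s x) from funext fun s => hu s x]
    exact hfull.deriv
  rw [hut, hsecond, hD1 x hx, hu t x]
  have hhelp : σ ^ 2 / 2 * x ^ 2 * (c * Real.exp (-(g t x) ^ 2 / 2) * (1 / (x * (σ * st))))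
      = x * (c * Real.exp (-(g t x) ^ 2 / 2)) * (σ * (1 / (2 * st))) := by
    field_simp
  rw [hhelp]
  linear_combination (σ * (1 / (2 * st)) - gt') * (key x hx)
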